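/- Let c₁, c₂, c₃ > 0 satisfy c₁c₂ = c₁c₃ + c₂c₃, let ε₁, ε₂, ε₃ ∈ {−1, 1}, and define F(x,y,z) = ε₁e^{√c₁·x} + ε₂e^{√c₂·y} + ε₃e^{√c₃·z}. Then for every (x,y,z) ∈ ℝ³ with F(x,y,z) = 0: (i) E[F](x,y,z) = 0 (the surface {F = 0} has zero mean curvature), and (ii) F_x² + F_y² − F_z² = (c₁ε₁e^{√c₁·x} − c₂ε₂e^{√c₂·y})²/(c₁ + c₂) ≥ 0, so the surface is timelike except where c₁ε₁e^{√c₁·x} = c₂ε₂e^{√c₂·y}. -/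

import Mathlib

/-- Partial derivative with respect to the first variable. -/
noncomputable def px (F : ℝ → ℝ → ℝ → ℝ) (x y z : ℝ) : ℝ := deriv (fun t => F t y z) x

/-- Partial derivative with respect to the second variable. -/
noncomputable def py (F : ℝ → ℝ → ℝ → ℝ) (x y z : ℝ) : ℝ := deriv (fun t => F x t z) y

/-- Partial derivative with respect to the third variable. -/
noncomputable def pz (F : ℝ → ℝ → ℝ → ℝ) (x y z : ℝ) : ℝ := deriv (fun t => F x y t) z

/-- The zero mean curvature expression `E[F]` for a level surface `{F = 0}` in
Lorentz–Minkowski space `𝕃³ = (ℝ³, dx² + dy² − dz²)`: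
`E[F] = −(F_x² + F_y² − F_z²)(F_xx + F_yy − F_zz) + F_x²F_xx + F_y²F_yy + F_z²F_zz
        + 2F_xF_yF_xy − 2F_xF_zF_xz − 2F_yF_zF_yz`. -/
noncomputable def Eop (F : ℝ → ℝ → ℝ → ℝ) (x y z : ℝ) : ℝ :=
  -(px F x y z ^ 2 + py F x y z ^ 2 - pz F x y z ^ 2) *
      (px (px F) x y z + py (py F) x y z - pz (pz F) x y z)
    + px F x y z ^ 2 * px (px F) x y z
    + py F x y z ^ 2 * py (py F) x y z
    + pz F x y z ^ 2 * pz (pz F) x y z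
    + 2 * px F x y z * py F x y z * py (px F) x y z
    - 2 * px F x y z * pz F x y z * pz (px F) x y z
    - 2 * py F x y z * pz F x y z * pz (py F) x y z

private lemma deriv_mul_exp_add (a k C x : ℝ) :
    deriv (fun t => a * Real.exp (k * t) + C) x = a * k * Real.exp (k * x) := by
  have h : HasDerivAt (fun t : ℝ => a * Real.exp (k * t) + C)
      (a * k * Real.exp (k * x)) x := by
    have h1 := (((hasDerivAt_id x).const_mul k).exp.const_mul a).add_const C
    simp only [id_eq] at h1
    exact h1.congr_deriv (by ring)
  exact h.deriv

private lemma deriv_mul_exp (a k x : ℝ) :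
    deriv (fun t => a * Real.exp (k * t)) x = a * k * Real.exp (k * x) := by
  have h : HasDerivAt (fun t : ℝ => a * Real.exp (k * t))
      (a * k * Real.exp (k * x)) x := by
    have h1 := ((hasDerivAt_id x).const_mul k).exp.const_mul a
    simp only [id_eq] at h1
    exact h1.congr_deriv (by ring)
  exact h.deriv

/-- For `c₁, c₂, c₃ > 0` with `c₁c₂ = c₁c₃ + c₂c₃` and signs `εᵢ ∈ {−1,1}`, the separable
surface `ε₁e^{√c₁x} + ε₂e^{√c₂y} + ε₃e^{√c₃z} = 0` has zero mean curvature, and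
`F_x² + F_y² − F_z² = (c₁ε₁e^{√c₁x} − c₂ε₂e^{√c₂y})²/(c₁+c₂) ≥ 0`: the surface is timelike
except where `c₁ε₁e^{√c₁x} = c₂ε₂e^{√c₂y}`. -/
theorem stmt_10 (c₁ c₂ c₃ : ℝ) (hc₁ : 0 < c₁) (hc₂ : 0 < c₂) (hc₃ : 0 < c₃)
    (hc : c₁ * c₂ = c₁ * c₃ + c₂ * c₃)
    (ε₁ ε₂ ε₃ : ℝ) (hε₁ : ε₁ = 1 ∨ ε₁ = -1) (hε₂ : ε₂ = 1 ∨ ε₂ = -1)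
    (hε₃ : ε₃ = 1 ∨ ε₃ = -1)
    (F : ℝ → ℝ → ℝ → ℝ)
    (hF : ∀ x y z : ℝ, F x y z =
      ε₁ * Real.exp (Real.sqrt c₁ * x) + ε₂ * Real.exp (Real.sqrt c₂ * y)
        + ε₃ * Real.exp (Real.sqrt c₃ * z)) :
    ∀ x y z : ℝ, F x y z = 0 →
      Eop F x y z = 0 ∧
      px F x y z ^ 2 + py F x y z ^ 2 - pz F x y z ^ 2
        = (c₁ * ε₁ * Real.exp (Real.sqrt c₁ * x)
            - c₂ * ε₂ * Real.exp (Real.sqrt c₂ * y)) ^ 2 / (c₁ + c₂) ∧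
      0 ≤ px F x y z ^ 2 + py F x y z ^ 2 - pz F x y z ^ 2 := by
  set k₁ := Real.sqrt c₁ with hk₁def
  set k₂ := Real.sqrt c₂ with hk₂def
  set k₃ := Real.sqrt c₃ with hk₃def
  have hk₁ : k₁ ^ 2 = c₁ := Real.sq_sqrt hc₁.le
  have hk₂ : k₂ ^ 2 = c₂ := Real.sq_sqrt hc₂.le
  have hk₃ : k₃ ^ 2 = c₃ := Real.sq_sqrt hc₃.le
  -- first partial derivatives
  have hpx : ∀ x y z : ℝ, px F x y z = ε₁ * k₁ * Real.exp (k₁ * x) := by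
    intro x y z
    have hfun : (fun t => F t y z) = fun t =>
        ε₁ * Real.exp (k₁ * t) + (ε₂ * Real.exp (k₂ * y) + ε₃ * Real.exp (k₃ * z)) := by
      funext t; rw [hF]; ring
    rw [px, hfun, deriv_mul_exp_add]
  have hpy : ∀ x y z : ℝ, py F x y z = ε₂ * k₂ * Real.exp (k₂ * y) := by
    intro x y z
    have hfun : (fun t => F x t z) = fun t =>
        ε₂ * Real.exp (k₂ * t) + (ε₁ * Real.exp (k₁ * x) + ε₃ * Real.exp (k₃ * z)) := by
      funext t; rw [hF]; ring
    rw [py, hfun, deriv_mul_exp_add]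
  have hpz : ∀ x y z : ℝ, pz F x y z = ε₃ * k₃ * Real.exp (k₃ * z) := by
    intro x y z
    have hfun : (fun t => F x y t) = fun t =>
        ε₃ * Real.exp (k₃ * t) + (ε₁ * Real.exp (k₁ * x) + ε₂ * Real.exp (k₂ * y)) := by
      funext t; rw [hF]; ring
    rw [pz, hfun, deriv_mul_exp_add]
  -- second partial derivatives
  have hpxx : ∀ x y z : ℝ, px (px F) x y z = ε₁ * k₁ * k₁ * Real.exp (k₁ * x) := by
    intro x y z
    have hfun : (fun t => px F t y z) = fun t => (ε₁ * k₁) * Real.exp (k₁ * t) := by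
      funext t; rw [hpx]
    rw [px, hfun, deriv_mul_exp]
  have hpyy : ∀ x y z : ℝ, py (py F) x y z = ε₂ * k₂ * k₂ * Real.exp (k₂ * y) := by
    intro x y z
    have hfun : (fun t => py F x t z) = fun t => (ε₂ * k₂) * Real.exp (k₂ * t) := by
      funext t; rw [hpy]
    rw [py, hfun, deriv_mul_exp]
  have hpzz : ∀ x y z : ℝ, pz (pz F) x y z = ε₃ * k₃ * k₃ * Real.exp (k₃ * z) := by
    intro x y z
    have hfun : (fun t => pz F x y t) = fun t => (ε₃ * k₃) * Real.exp (k₃ * t) := by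
      funext t; rw [hpz]
    rw [pz, hfun, deriv_mul_exp]
  have hpxy : ∀ x y z : ℝ, py (px F) x y z = 0 := by
    intro x y z
    have hfun : (fun t => px F x t z) = fun _ => ε₁ * k₁ * Real.exp (k₁ * x) := by
      funext t; rw [hpx]
    rw [py, hfun, deriv_const]
  have hpxz : ∀ x y z : ℝ, pz (px F) x y z = 0 := by
    intro x y z
    have hfun : (fun t => px F x y t) = fun _ => ε₁ * k₁ * Real.exp (k₁ * x) := by
      funext t; rw [hpx]
    rw [pz, hfun, deriv_const]
  have hpyz : ∀ x y z : ℝ, pz (py F) x y z = 0 := by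
    intro x y z
    have hfun : (fun t => py F x y t) = fun _ => ε₂ * k₂ * Real.exp (k₂ * y) := by
      funext t; rw [hpy]
    rw [pz, hfun, deriv_const]
  intro x y z hF0
  have hsum : ε₁ * Real.exp (k₁ * x) + ε₂ * Real.exp (k₂ * y)
      + ε₃ * Real.exp (k₃ * z) = 0 := by rw [← hF x y z]; exact hF0
  set a := ε₁ * Real.exp (k₁ * x) with ha
  set b := ε₂ * Real.exp (k₂ * y) with hb
  set c := ε₃ * Real.exp (k₃ * z) with hcc
  have hcval : c = -a - b := by linarith
  have hc₁₂ : c₁ + c₂ ≠ 0 := by positivity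
  have hc3 : c₃ = c₁ * c₂ / (c₁ + c₂) := by
    field_simp
    linarith
  -- rewrite derivatives in terms of a, b, c
  have Hpx : px F x y z = k₁ * a := by rw [hpx, ha]; ring
  have Hpy : py F x y z = k₂ * b := by rw [hpy, hb]; ring
  have Hpz : pz F x y z = k₃ * c := by rw [hpz, hcc]; ring
  have Hpxx : px (px F) x y z = c₁ * a := by rw [hpxx, ha, ← hk₁]; ring
  have Hpyy : py (py F) x y z = c₂ * b := by rw [hpyy, hb, ← hk₂]; ring
  have Hpzz : pz (pz F) x y z = c₃ * c := by rw [hpzz, hcc, ← hk₃]; ring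
  have hsq : ∀ u : ℝ, (u * a) ^ 2 = u ^ 2 * a ^ 2 := fun u => by ring
  refine ⟨?_, ?_, ?_⟩
  · rw [Eop, Hpx, Hpy, Hpz, Hpxx, Hpyy, Hpzz, hpxy, hpxz, hpyz]
    have : (k₁ * a) ^ 2 = c₁ * a ^ 2 := by rw [← hk₁]; ring
    rw [this]
    have : (k₂ * b) ^ 2 = c₂ * b ^ 2 := by rw [← hk₂]; ring
    rw [this]
    have : (k₃ * c) ^ 2 = c₃ * c ^ 2 := by rw [← hk₃]; ring
    rw [this, hcval, hc3]
    field_simp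
    ring
  · rw [Hpx, Hpy, Hpz]
    have h1 : (k₁ * a) ^ 2 = c₁ * a ^ 2 := by rw [← hk₁]; ring
    have h2 : (k₂ * b) ^ 2 = c₂ * b ^ 2 := by rw [← hk₂]; ring
    have h3 : (k₃ * c) ^ 2 = c₃ * c ^ 2 := by rw [← hk₃]; ring
    have hgoal : c₁ * a ^ 2 + c₂ * b ^ 2 - c₃ * c ^ 2
        = (c₁ * a - c₂ * b) ^ 2 / (c₁ + c₂) := by
      rw [hcval, hc3]
      field_simp
      ring
    rw [h1, h2, h3, hgoal, ha, hb]
    ring_nf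
  · rw [Hpx, Hpy, Hpz]
    have h1 : (k₁ * a) ^ 2 = c₁ * a ^ 2 := by rw [← hk₁]; ring
    have h2 : (k₂ * b) ^ 2 = c₂ * b ^ 2 := by rw [← hk₂]; ring
    have h3 : (k₃ * c) ^ 2 = c₃ * c ^ 2 := by rw [← hk₃]; ring
    have hgoal : c₁ * a ^ 2 + c₂ * b ^ 2 - c₃ * c ^ 2
        = (c₁ * a - c₂ * b) ^ 2 / (c₁ + c₂) := by
      rw [hcval, hc3]
      field_simp
      ring
    rw [h1, h2, h3, hgoal]
    positivity
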